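/- Let (φ_k)_{k∈ℕ} be a sequence of positive reals with φ_k → 0, and let (N_k)_{k∈ℕ} be natural numbers with N_k φ_k bounded. For each k, let M_{1,k}, …, M_{N_k,k} be invertible real 2×2 matrices such that for every m ∈ ℕ one has sup_{1 ≤ j ≤ N_k} ‖M_{j,k} − A‖ = o(φ_k^m) as k → ∞, where A is the unipotent Jordan cell A = [[1,1],[0,1]] and ‖·‖ is the operator norm. Then the ordered products satisfy, for every m ∈ ℕ: ‖M_{N_k,k} ⋯ M_{2,k} M_{1,k} − A^{N_k}‖ = o(φ_k^m) as k → ∞, where A^{N} = [[1,N],[0,1]]. -/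

import Mathlib

open Asymptotics Filter
open scoped Matrix.Norms.L2Operator

lemma prodRev_succ {R : Type*} [Monoid R] (f : ℕ → R) (n : ℕ) :
    ((List.range (n+1)).reverse.map f).prod = f n * ((List.range n).reverse.map f).prod := by
  rw [List.range_succ, List.reverse_append]
  simp

lemma telescope {R : Type*} [Ring R] (A : R) (f : ℕ → R) (n : ℕ) :
    ((List.range n).reverse.map f).prod - A ^ n =
      ∑ j ∈ Finset.range n, A ^ (n - 1 - j) * (f j - A) * ((List.range j).reverse.map f).prod := by
  induction n with
  | zero => simp
  | succ n ih =>
    calc ((List.range (n+1)).reverse.map f).prod - A ^ (n+1)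
        = (f n - A) * ((List.range n).reverse.map f).prod
            + A * (((List.range n).reverse.map f).prod - A ^ n) := by
          rw [prodRev_succ, pow_succ']; noncomm_ring
      _ = (f n - A) * ((List.range n).reverse.map f).prod
            + ∑ j ∈ Finset.range n,
              A * (A ^ (n - 1 - j) * (f j - A) * ((List.range j).reverse.map f).prod) := by
          rw [ih, Finset.mul_sum]
      _ = ∑ j ∈ Finset.range (n+1),
            A ^ (n + 1 - 1 - j) * (f j - A) * ((List.range j).reverse.map f).prod := by
          rw [Finset.sum_range_succ]
          have h : ∀ j ∈ Finset.range n,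
              A * (A ^ (n - 1 - j) * (f j - A) * ((List.range j).reverse.map f).prod)
              = A ^ (n + 1 - 1 - j) * (f j - A) * ((List.range j).reverse.map f).prod := by
            intro j hj
            rw [Finset.mem_range] at hj
            have : n + 1 - 1 - j = (n - 1 - j) + 1 := by omega
            rw [this, pow_succ']; noncomm_ring
          rw [Finset.sum_congr rfl h]
          simp [add_comm]

lemma gronwall {R : Type*} [NormedRing R] (A : R) (f : ℕ → R) (c u : ℝ) (hu : 0 ≤ u)
    (n : ℕ) : (∀ i, i ≤ n → ‖A ^ i‖ ≤ c) → (∀ j, j < n → ‖f j - A‖ ≤ u) →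
    ‖((List.range n).reverse.map f).prod - A ^ n‖ + c ≤ c * (1 + c * u) ^ n := by
  induction n using Nat.strong_induction_on with
  | _ n IH =>
    intro hA hf
    have hc : 0 ≤ c := le_trans (norm_nonneg _) (hA 0 (Nat.zero_le n))
    have hcu : 0 ≤ c * u := mul_nonneg hc hu
    have hbound : ∀ j, j < n → ‖((List.range j).reverse.map f).prod‖ ≤ c * (1 + c * u) ^ j := by
      intro j hj
      have h1 := IH j hj (fun i hi => hA i (le_trans hi (le_of_lt hj)))
        (fun i hi => hf i (lt_trans hi hj))
      have h2 : ‖((List.range j).reverse.map f).prod‖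
          ≤ ‖A ^ j‖ + ‖((List.range j).reverse.map f).prod - A ^ j‖ := by
        calc ‖((List.range j).reverse.map f).prod‖
            = ‖A ^ j + (((List.range j).reverse.map f).prod - A ^ j)‖ := by
              congr 1; abel
          _ ≤ _ := norm_add_le _ _
      have h3 := hA j (le_of_lt hj)
      linarith
    have key : ‖((List.range n).reverse.map f).prod - A ^ n‖
        ≤ ∑ j ∈ Finset.range n, c * u * (c * (1 + c * u) ^ j) := by
      rw [telescope]
      refine le_trans (norm_sum_le _ _) (Finset.sum_le_sum ?_)
      intro j hj
      rw [Finset.mem_range] at hj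
      calc ‖A ^ (n - 1 - j) * (f j - A) * ((List.range j).reverse.map f).prod‖
          ≤ ‖A ^ (n - 1 - j) * (f j - A)‖ * ‖((List.range j).reverse.map f).prod‖ :=
            norm_mul_le _ _
        _ ≤ ‖A ^ (n - 1 - j)‖ * ‖f j - A‖ * ‖((List.range j).reverse.map f).prod‖ := by
            apply mul_le_mul_of_nonneg_right (norm_mul_le _ _) (norm_nonneg _)
        _ ≤ c * u * (c * (1 + c * u) ^ j) := by
            apply mul_le_mul
            · exact mul_le_mul (hA _ (by omega)) (hf j hj) (norm_nonneg _) hc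
            · exact hbound j hj
            · exact norm_nonneg _
            · exact mul_nonneg hc hu
    have geom : ∑ j ∈ Finset.range n, c * u * (c * (1 + c * u) ^ j)
        = c * ((1 + c * u) ^ n - 1) := by
      have := geom_sum_mul (1 + c * u) n
      have h1 : (1 + c * u) - 1 = c * u := by ring
      rw [h1] at this
      calc ∑ j ∈ Finset.range n, c * u * (c * (1 + c * u) ^ j)
          = ∑ j ∈ Finset.range n, (1 + c * u) ^ j * (c * u) * c := by
            apply Finset.sum_congr rfl; intros; ring
        _ = (∑ j ∈ Finset.range n, (1 + c * u) ^ j) * (c * u) * c := by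
            rw [Finset.sum_mul, Finset.sum_mul]
        _ = ((1 + c * u) ^ n - 1) * c := by rw [this]
        _ = c * ((1 + c * u) ^ n - 1) := by ring
    have := le_trans key (le_of_eq geom)
    nlinarith [this]

lemma Esq : (!![0,1;0,0] : Matrix (Fin 2) (Fin 2) ℝ) * !![0,1;0,0] = 0 := by
  ext i j
  fin_cases i <;> fin_cases j <;> simp [Matrix.mul_fin_two]

lemma AeqE : (!![1,1;0,1] : Matrix (Fin 2) (Fin 2) ℝ) = 1 + !![0,1;0,0] := by
  ext i j
  fin_cases i <;> fin_cases j <;> simp [Matrix.one_fin_two]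

lemma Apow_eq (i : ℕ) : (!![1,1;0,1] : Matrix (Fin 2) (Fin 2) ℝ) ^ i
    = 1 + (i : ℝ) • !![0,1;0,0] := by
  induction i with
  | zero => simp
  | succ i ih =>
    rw [pow_succ, ih, AeqE]
    rw [add_mul, mul_add, mul_add, smul_mul_assoc, smul_mul_assoc, Esq]
    push_cast
    rw [add_smul, one_smul]
    simp only [mul_one, one_mul, Matrix.mul_one, smul_zero]
    abel

/-- Let `φ_k > 0`, `φ_k → 0`, and `N_k ∈ ℕ` with `N_k φ_k` bounded.
Let `M_{1,k}, …, M_{N_k,k}` be invertible `2×2` real matrices with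
`sup_{1 ≤ j ≤ N_k} ‖M_{j,k} − A‖ = o(φ_k^m)` (as `k → ∞`) for every `m`, where
`A = [[1,1],[0,1]]` and `‖·‖` is the operator norm. Then for every `m` the ordered
products satisfy `‖M_{N_k,k} ⋯ M_{1,k} − A^{N_k}‖ = o(φ_k^m)` as `k → ∞`. -/
theorem statement10 (φ : ℕ → ℝ) (hφpos : ∀ k, 0 < φ k)
    (hφ0 : Tendsto φ atTop (nhds 0))
    (N : ℕ → ℕ) (hNbdd : ∃ C : ℝ, ∀ k, (N k : ℝ) * φ k ≤ C)
    (M : ℕ → ℕ → Matrix (Fin 2) (Fin 2) ℝ)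
    (hMinv : ∀ k, ∀ j, 1 ≤ j → j ≤ N k → IsUnit (M k j))
    (A : Matrix (Fin 2) (Fin 2) ℝ) (hA : A = !![1, 1; 0, 1])
    (hclose : ∀ m : ℕ, ∃ u : ℕ → ℝ,
      (∀ k, ∀ j, 1 ≤ j → j ≤ N k → ‖M k j - A‖ ≤ u k) ∧
      u =o[atTop] fun k => φ k ^ m) :
    ∀ m : ℕ,
      (fun k => ‖((List.range (N k)).reverse.map (fun j => M k (j + 1))).prod - A ^ N k‖)
        =o[atTop] fun k => φ k ^ m := by
  intro m
  obtain ⟨C, hC⟩ := hNbdd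
  have hC0 : 0 ≤ C :=
    le_trans (mul_nonneg (Nat.cast_nonneg _) (hφpos 0).le) (hC 0)
  obtain ⟨u, hub, huo⟩ := hclose (m + 3)
  set u' : ℕ → ℝ := fun k => |u k| with hu'def
  have hu'nn : ∀ k, 0 ≤ u' k := fun k => abs_nonneg _
  have hub' : ∀ k, ∀ j, 1 ≤ j → j ≤ N k → ‖M k j - A‖ ≤ u' k :=
    fun k j h1 h2 => (hub k j h1 h2).trans (le_abs_self _)
  have huo' : u' =o[atTop] fun k => φ k ^ (m + 3) := huo.abs_left
  subst hA
  set E : Matrix (Fin 2) (Fin 2) ℝ := !![0,1;0,0] with hE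
  set c₀ : ℝ := ‖(1 : Matrix (Fin 2) (Fin 2) ℝ)‖ + ‖E‖ + 1 with hc₀
  have hc₀1 : 1 ≤ c₀ := by
    have h1 := norm_nonneg (1 : Matrix (Fin 2) (Fin 2) ℝ)
    have h2 := norm_nonneg E
    rw [hc₀]; linarith
  have hc₀0 : 0 ≤ c₀ := by linarith
  have hApow : ∀ i : ℕ, ‖(!![1,1;0,1] : Matrix (Fin 2) (Fin 2) ℝ) ^ i‖ ≤ c₀ * (i + 1) := by
    intro i
    rw [Apow_eq]
    have h1 : ‖(1 : Matrix (Fin 2) (Fin 2) ℝ) + (i : ℝ) • E‖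
        ≤ ‖(1 : Matrix (Fin 2) (Fin 2) ℝ)‖ + ‖(i : ℝ) • E‖ := norm_add_le _ _
    have h2 : ‖(i : ℝ) • E‖ = (i : ℝ) * ‖E‖ := by
      rw [norm_smul, Real.norm_eq_abs, abs_of_nonneg (Nat.cast_nonneg i)]
    have h3 := norm_nonneg (1 : Matrix (Fin 2) (Fin 2) ℝ)
    have h4 := norm_nonneg E
    have h5 : (0 : ℝ) ≤ (i : ℝ) := Nat.cast_nonneg i
    rw [hc₀]
    nlinarith
  -- pointwise key bound
  have hkey : ∀ k,
      ‖((List.range (N k)).reverse.map (fun j => M k (j + 1))).prod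
        - (!![1,1;0,1] : Matrix (Fin 2) (Fin 2) ℝ) ^ N k‖
      ≤ c₀ * ((N k : ℝ) + 1) * ((1 + c₀ * ((N k : ℝ) + 1) * u' k) ^ N k - 1) := by
    intro k
    have hAc : ∀ i, i ≤ N k →
        ‖(!![1,1;0,1] : Matrix (Fin 2) (Fin 2) ℝ) ^ i‖ ≤ c₀ * ((N k : ℝ) + 1) := by
      intro i hi
      refine le_trans (hApow i) (mul_le_mul_of_nonneg_left ?_ hc₀0)
      have : (i : ℝ) ≤ (N k : ℝ) := Nat.cast_le.mpr hi
      linarith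
    have hfc : ∀ j, j < N k →
        ‖M k (j + 1) - (!![1,1;0,1] : Matrix (Fin 2) (Fin 2) ℝ)‖ ≤ u' k := by
      intro j hj
      exact hub' k (j + 1) (Nat.le_add_left 1 j) (by omega)
    have h := gronwall (!![1,1;0,1] : Matrix (Fin 2) (Fin 2) ℝ)
      (fun j => M k (j + 1)) (c₀ * ((N k : ℝ) + 1)) (u' k) (hu'nn k) (N k) hAc hfc
    nlinarith [h]
  -- eventual bounds
  have ev1 : ∀ᶠ k in atTop, φ k < 1 := hφ0.eventually (gt_mem_nhds one_pos)
  -- u' is also o(φ^2)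
  have hφ2 : (fun k => φ k ^ (m + 3)) =O[atTop] fun k => φ k ^ 2 := by
    refine IsBigO.of_bound 1 ?_
    filter_upwards [ev1] with k h1
    rw [one_mul, Real.norm_eq_abs, Real.norm_eq_abs,
      abs_of_nonneg (pow_nonneg (hφpos k).le _), abs_of_nonneg (pow_nonneg (hφpos k).le _)]
    exact pow_le_pow_of_le_one (hφpos k).le h1.le (by omega)
  have huo2 : u' =o[atTop] fun k => φ k ^ 2 := huo'.trans_isBigO hφ2
  set ε : ℝ := (c₀ * (C + 1) ^ 2)⁻¹ with hεdef
  have hc₀pos : 0 < c₀ := lt_of_lt_of_le one_pos hc₀1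
  have hεpos : 0 < ε := by
    rw [hεdef]
    exact inv_pos.mpr (mul_pos hc₀pos (by positivity))
  have ev2 : ∀ᶠ k in atTop, ‖u' k‖ ≤ ε * ‖φ k ^ 2‖ := huo2.def hεpos
  have ev_small : ∀ᶠ k in atTop, (N k : ℝ) * (c₀ * ((N k : ℝ) + 1) * u' k) ≤ 1 := by
    filter_upwards [ev1, ev2] with k h1 h2
    rw [Real.norm_eq_abs, abs_of_nonneg (hu'nn k), Real.norm_eq_abs,
      abs_of_nonneg (by positivity)] at h2
    have a1 : (N k : ℝ) * φ k ≤ C := hC k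
    have a2 : ((N k : ℝ) + 1) * φ k ≤ C + 1 := by nlinarith [h1, (hφpos k).le]
    have a3 : 0 ≤ (N k : ℝ) := Nat.cast_nonneg _
    have a4 : 0 < φ k := hφpos k
    have hne : c₀ * (C + 1) ^ 2 ≠ 0 := (mul_pos hc₀pos (by positivity)).ne'
    have hεeq : c₀ * (C + 1) ^ 2 * ε = 1 := by
      rw [hεdef]; field_simp
    have b1 : (N k : ℝ) * φ k ≤ C + 1 := by linarith
    have b2 : (0 : ℝ) ≤ (N k : ℝ) * φ k := mul_nonneg a3 a4.le
    have b3 : ((N k : ℝ) * φ k) * (((N k : ℝ) + 1) * φ k) ≤ (C + 1) * (C + 1) :=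
      mul_le_mul b1 a2 (mul_nonneg (by linarith) a4.le) (by linarith)
    calc (N k : ℝ) * (c₀ * ((N k : ℝ) + 1) * u' k)
        ≤ (N k : ℝ) * (c₀ * ((N k : ℝ) + 1) * (ε * φ k ^ 2)) := by
          apply mul_le_mul_of_nonneg_left _ a3
          exact mul_le_mul_of_nonneg_left h2 (by nlinarith)
      _ = c₀ * ε * (((N k : ℝ) * φ k) * (((N k : ℝ) + 1) * φ k)) := by ring
      _ ≤ c₀ * ε * ((C + 1) * (C + 1)) :=
          mul_le_mul_of_nonneg_left b3 (mul_nonneg hc₀0 hεpos.le)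
      _ = c₀ * (C + 1) ^ 2 * ε := by ring
      _ = 1 := hεeq
  have ev3 : ∀ᶠ k in atTop, (1 + c₀ * ((N k : ℝ) + 1) * u' k) ^ N k ≤ 3 := by
    filter_upwards [ev_small] with k hk
    set x : ℝ := c₀ * ((N k : ℝ) + 1) * u' k with hx
    have hx0 : 0 ≤ x := by
      rw [hx]; positivity
    calc (1 + x) ^ N k ≤ Real.exp x ^ N k := by
          apply pow_le_pow_left₀ (by linarith)
          rw [add_comm]
          exact Real.add_one_le_exp x
      _ = Real.exp ((N k : ℝ) * x) := (Real.exp_nat_mul x (N k)).symm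
      _ ≤ Real.exp 1 := Real.exp_le_exp.mpr hk
      _ ≤ 3 := by
          have := Real.exp_one_lt_d9
          linarith
  have ev4 : ∀ᶠ k in atTop,
      ‖((List.range (N k)).reverse.map (fun j => M k (j + 1))).prod
        - (!![1,1;0,1] : Matrix (Fin 2) (Fin 2) ℝ) ^ N k‖
      ≤ 3 * c₀ ^ 2 * (((N k : ℝ) + 1) ^ 3 * u' k) := by
    filter_upwards [ev3] with k h3
    set x : ℝ := c₀ * ((N k : ℝ) + 1) * u' k with hx
    have hx0 : 0 ≤ x := by rw [hx]; positivity
    have hgeo : (1 + x) ^ N k - 1 ≤ (N k : ℝ) * 3 * x := by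
      have hgs := geom_sum_mul (1 + x) (N k)
      have h1 : (1 + x) - 1 = x := by ring
      rw [h1] at hgs
      have hsum : ∑ i ∈ Finset.range (N k), (1 + x) ^ i ≤ (N k : ℝ) * 3 := by
        have hb : ∀ i ∈ Finset.range (N k), (1 + x) ^ i ≤ 3 := by
          intro i hi
          rw [Finset.mem_range] at hi
          calc (1 + x) ^ i ≤ (1 + x) ^ N k :=
                pow_le_pow_right₀ (by linarith) hi.le
            _ ≤ 3 := h3
        calc ∑ i ∈ Finset.range (N k), (1 + x) ^ i
            ≤ ∑ _i ∈ Finset.range (N k), (3 : ℝ) := Finset.sum_le_sum hb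
          _ = (N k : ℝ) * 3 := by simp [mul_comm]
      calc (1 + x) ^ N k - 1 = (∑ i ∈ Finset.range (N k), (1 + x) ^ i) * x := hgs.symm
        _ ≤ (N k : ℝ) * 3 * x := mul_le_mul_of_nonneg_right hsum hx0
    have hk := hkey k
    have hNle : (N k : ℝ) ≤ (N k : ℝ) + 1 := by linarith
    have hN0 : (0 : ℝ) ≤ (N k : ℝ) := Nat.cast_nonneg _
    have hc1 : 0 ≤ c₀ * ((N k : ℝ) + 1) := by positivity
    calc ‖((List.range (N k)).reverse.map (fun j => M k (j + 1))).prod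
          - (!![1,1;0,1] : Matrix (Fin 2) (Fin 2) ℝ) ^ N k‖
        ≤ c₀ * ((N k : ℝ) + 1) * ((1 + x) ^ N k - 1) := hk
      _ ≤ c₀ * ((N k : ℝ) + 1) * ((N k : ℝ) * 3 * x) :=
          mul_le_mul_of_nonneg_left hgeo hc1
      _ ≤ 3 * c₀ ^ 2 * (((N k : ℝ) + 1) ^ 3 * u' k) := by
          rw [hx]
          nlinarith [hu'nn k, mul_nonneg (mul_nonneg hc₀0 hc₀0) (hu'nn k),
            mul_nonneg hN0 (hu'nn k)]
  -- assemble asymptotics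
  have hO3 : (fun k => ‖((List.range (N k)).reverse.map (fun j => M k (j + 1))).prod
        - (!![1,1;0,1] : Matrix (Fin 2) (Fin 2) ℝ) ^ N k‖)
      =O[atTop] fun k => ((N k : ℝ) + 1) ^ 3 * u' k := by
    refine IsBigO.of_bound (3 * c₀ ^ 2) ?_
    filter_upwards [ev4] with k h4
    rw [Real.norm_eq_abs, abs_of_nonneg (norm_nonneg _), Real.norm_eq_abs,
      abs_of_nonneg (by positivity : (0:ℝ) ≤ ((N k : ℝ) + 1) ^ 3 * u' k)]
    linarith [h4]
  have h1 : (fun k => ((N k : ℝ) + 1) ^ 3 * u' k)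
      =o[atTop] fun k => ((N k : ℝ) + 1) ^ 3 * φ k ^ (m + 3) :=
    (isBigO_refl (fun k => ((N k : ℝ) + 1) ^ 3) atTop).mul_isLittleO huo'
  have h2 : (fun k => ((N k : ℝ) + 1) ^ 3 * φ k ^ (m + 3))
      =O[atTop] fun k => φ k ^ m := by
    refine IsBigO.of_bound ((C + 1) ^ 3) ?_
    filter_upwards [ev1] with k hk1
    have a1 : (N k : ℝ) * φ k ≤ C := hC k
    have a2 : ((N k : ℝ) + 1) * φ k ≤ C + 1 := by nlinarith [(hφpos k).le]
    have a3 : (0 : ℝ) < φ k := hφpos k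
    have a4 : (0 : ℝ) ≤ (N k : ℝ) + 1 := by positivity
    rw [Real.norm_eq_abs, abs_of_nonneg (by positivity), Real.norm_eq_abs,
      abs_of_nonneg (by positivity : (0:ℝ) ≤ φ k ^ m)]
    have key : ((N k : ℝ) + 1) ^ 3 * φ k ^ (m + 3)
        = (((N k : ℝ) + 1) * φ k) ^ 3 * φ k ^ m := by ring
    rw [key]
    have h5 : (((N k : ℝ) + 1) * φ k) ^ 3 ≤ (C + 1) ^ 3 := by
      apply pow_le_pow_left₀ (by positivity) a2
    exact mul_le_mul_of_nonneg_right h5 (by positivity)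
  exact hO3.trans_isLittleO (h1.trans_isBigO h2)
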